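/- Let Θ, Θ̃ : [0,∞) → ℝ^N be two solutions of the inertial Kuramoto model for N identical oscillators with all-to-all coupling (parameters m, γ, κ > 0), with Σ_i θ_i(0) = Σ_i θ̃_i(0) = 0 and Σ_i ω_i(0) = Σ_i ω̃_i(0) = 0. Suppose γ > 1/2 and that there exists S ∈ (0, π) with D(Θ(t)) + D(Θ̃(t)) ≤ S for all t ≥ 0, and that the interval [κ/(2Γ̃), (2γ−1)/(2m)] is nonempty, where Γ̃ := sin(S)/S. Then the flow is uniformly stable in ℓ²: there exists a constant C > 0, independent of time, such that ‖Θ(t) − Θ̃(t)‖ + ‖Ω(t) − Ω̃(t)‖ ≤ C·( ‖Θ(0) − Θ̃(0)‖ + ‖Ω(0) − Ω̃(0)‖ ) for all t ≥ 0. -/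

import Mathlib

/-- The phase diameter of a configuration `Θ : Fin N → ℝ`:
`D(Θ) = max_{i,j} (Θ_i − Θ_j)`. -/
noncomputable def phaseDiam {N : ℕ} (Θ : Fin N → ℝ) : ℝ :=
  ⨆ p : Fin N × Fin N, (Θ p.1 - Θ p.2)


section KuramotoAux


open Real

lemma sin_lower_concave {c x : ℝ} (hc : 0 < c) (hcπ : c ≤ Real.pi)
    (hx0 : 0 ≤ x) (hxc : x ≤ c) : Real.sin c / c * x ≤ Real.sin x := by
  have ha : (0:ℝ) ≤ 1 - x / c := by
    have : x / c ≤ 1 := (div_le_one hc).2 hxc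
    linarith
  have hb : (0:ℝ) ≤ x / c := div_nonneg hx0 hc.le
  have hab : (1 - x / c) + x / c = 1 := by ring
  have h := strictConcaveOn_sin_Icc.concaveOn.2
    (Set.mem_Icc.2 ⟨le_rfl, Real.pi_pos.le⟩) (Set.mem_Icc.2 ⟨hc.le, hcπ⟩) ha hb hab
  simp only [smul_eq_mul, mul_zero, Real.sin_zero, zero_add, mul_zero] at h
  have hxc' : x / c * c = x := div_mul_cancel₀ x hc.ne'
  rw [hxc'] at h
  calc Real.sin c / c * x = x / c * Real.sin c := by ring
    _ ≤ Real.sin x := h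

lemma key_sin_ineq {S a b : ℝ} (hS0 : 0 < S) (hSπ : S < Real.pi)
    (hab : |a| + |b| ≤ S) :
    Real.sin S / S * (a - b) ^ 2 ≤ (Real.sin a - Real.sin b) * (a - b) := by
  have hSπ2 : S / 2 < Real.pi / 2 := by linarith
  have hS2 : 0 < S / 2 := by linarith
  set u := (a - b) / 2 with hu
  set w := (a + b) / 2 with hw
  have hau : |u| ≤ S / 2 := by
    rw [hu, abs_div]
    have : |a - b| ≤ |a| + |b| := abs_sub a b
    rw [abs_of_pos (by norm_num : (0:ℝ) < 2)]
    linarith [this, hab]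
  have haw : |w| ≤ S / 2 := by
    rw [hw, abs_div]
    have : |a + b| ≤ |a| + |b| := abs_add_le a b
    rw [abs_of_pos (by norm_num : (0:ℝ) < 2)]
    linarith [this, hab]
  -- sin u * u ≥ sin(S/2)/(S/2) * u^2
  have hsinu : Real.sin (S / 2) / (S / 2) * u ^ 2 ≤ Real.sin u * u := by
    rcases le_or_gt 0 u with h | h
    · have := sin_lower_concave hS2 (by linarith [Real.pi_pos]) h
        (by rw [abs_of_nonneg h] at hau; exact hau)
      calc Real.sin (S/2) / (S/2) * u ^ 2 = (Real.sin (S/2) / (S/2) * u) * u := by ring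
        _ ≤ Real.sin u * u := by
            apply mul_le_mul_of_nonneg_right this h
    · have h' : 0 ≤ -u := by linarith
      have := sin_lower_concave hS2 (by linarith [Real.pi_pos]) h'
        (by rw [abs_of_neg h] at hau; exact hau)
      rw [Real.sin_neg] at this
      calc Real.sin (S/2) / (S/2) * u ^ 2 = (Real.sin (S/2) / (S/2) * (-u)) * (-u) := by ring
        _ ≤ (-Real.sin u) * (-u) := by
            apply mul_le_mul_of_nonneg_right this h'
        _ = Real.sin u * u := by ring
  have hcosw : Real.cos (S / 2) ≤ Real.cos w := by
    rw [← Real.cos_abs w]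
    apply Real.cos_le_cos_of_nonneg_of_le_pi (abs_nonneg w) (by linarith [Real.pi_pos]) 
    linarith
  have hcosS2 : 0 < Real.cos (S / 2) := Real.cos_pos_of_mem_Ioo ⟨by linarith, hSπ2⟩
  have hsinuu : 0 ≤ Real.sin u * u := by
    nlinarith [hsinu, sq_nonneg u, Real.sin_pos_of_pos_of_lt_pi hS2 (by linarith [Real.pi_pos]),
      div_pos (Real.sin_pos_of_pos_of_lt_pi hS2 (by linarith [Real.pi_pos])) hS2]
  have hexp : (Real.sin a - Real.sin b) * (a - b) = 4 * (Real.cos w * (Real.sin u * u)) := by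
    rw [Real.sin_sub_sin, hu, hw]
    ring
  have hSsin : Real.sin S = 2 * Real.sin (S/2) * Real.cos (S/2) := by
    rw [← Real.sin_two_mul]
    congr 1
    ring
  have step : 4 * (Real.cos (S/2) * (Real.sin (S/2) / (S/2) * u ^ 2))
      ≤ 4 * (Real.cos w * (Real.sin u * u)) := by
    have h1 : Real.cos (S/2) * (Real.sin (S/2) / (S/2) * u ^ 2)
        ≤ Real.cos (S/2) * (Real.sin u * u) :=
      mul_le_mul_of_nonneg_left hsinu hcosS2.le
    have h2 : Real.cos (S/2) * (Real.sin u * u) ≤ Real.cos w * (Real.sin u * u) :=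
      mul_le_mul_of_nonneg_right hcosw hsinuu
    linarith
  rw [hexp]
  refine le_trans (le_of_eq ?_) step
  rw [hSsin, hu]
  field_simp
  ring





lemma antisym_double_sum' {N : ℕ} (g : Fin N → Fin N → ℝ)
    (hg : ∀ i j, g j i = - g i j) (x : Fin N → ℝ) :
    2 * ∑ i, ∑ j, x i * g i j = ∑ i, ∑ j, (x i - x j) * g i j := by
  have h1 : ∑ i, ∑ j, x j * g i j = - ∑ i, ∑ j, x i * g i j := by
    rw [Finset.sum_comm]
    rw [← Finset.sum_neg_distrib]
    apply Finset.sum_congr rfl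
    intro i _
    rw [← Finset.sum_neg_distrib]
    apply Finset.sum_congr rfl
    intro j _
    rw [hg i j]
    ring
  have h2 : ∑ i, ∑ j, (x i - x j) * g i j
      = (∑ i, ∑ j, x i * g i j) - ∑ i, ∑ j, x j * g i j := by
    rw [← Finset.sum_sub_distrib]
    apply Finset.sum_congr rfl
    intro i _
    rw [← Finset.sum_sub_distrib]
    apply Finset.sum_congr rfl
    intro j _
    ring
  rw [h2, h1]
  ring

lemma double_sum_sq' {N : ℕ} (x : Fin N → ℝ) :
    ∑ i, ∑ j, (x i - x j) ^ 2
      = 2 * N * (∑ i, x i ^ 2) - 2 * (∑ i, x i) ^ 2 := by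
  have : ∀ i j : Fin N, (x i - x j)^2 = x i ^2 - 2 * (x i * x j) + x j ^2 := by
    intro i j; ring
  simp only [this, Finset.sum_add_distrib, Finset.sum_sub_distrib,
    Finset.sum_const, Finset.card_univ, Fintype.card_fin, ← Finset.mul_sum,
    ← Finset.sum_mul, nsmul_eq_mul]
  ring



lemma cs_double' {N : ℕ} (f g : Fin N → Fin N → ℝ) :
    ∑ i, ∑ j, f i j * g i j
      ≤ Real.sqrt (∑ i, ∑ j, f i j ^ 2) * Real.sqrt (∑ i, ∑ j, g i j ^ 2) := by
  have e1 : ∑ p : Fin N × Fin N, f p.1 p.2 * g p.1 p.2 = ∑ i, ∑ j, f i j * g i j :=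
    Fintype.sum_prod_type _
  have e2 : ∑ p : Fin N × Fin N, f p.1 p.2 ^ 2 = ∑ i, ∑ j, f i j ^ 2 :=
    Fintype.sum_prod_type _
  have e3 : ∑ p : Fin N × Fin N, g p.1 p.2 ^ 2 = ∑ i, ∑ j, g i j ^ 2 :=
    Fintype.sum_prod_type _
  rw [← e1, ← e2, ← e3]
  set s := ∑ p : Fin N × Fin N, f p.1 p.2 * g p.1 p.2 with hs
  have hcs := Finset.sum_mul_sq_le_sq_mul_sq Finset.univ (fun p : Fin N × Fin N => f p.1 p.2)
    (fun p => g p.1 p.2)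
  have h1 : s ≤ |s| := le_abs_self s
  have h2 : |s| = Real.sqrt (s ^ 2) := (Real.sqrt_sq_eq_abs s).symm
  have h3 : Real.sqrt (s ^ 2)
      ≤ Real.sqrt ((∑ p : Fin N × Fin N, f p.1 p.2 ^ 2) * ∑ p : Fin N × Fin N, g p.1 p.2 ^ 2) :=
    Real.sqrt_le_sqrt hcs
  rw [Real.sqrt_mul (by positivity)] at h3
  linarith

lemma two_mul_sqrt_le' {A B P Q k : ℝ} (hA : 0 ≤ A) (hB : 0 ≤ B) (hP : 0 ≤ P) (hQ : 0 ≤ Q)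
    (hk : 0 ≤ k) (h : k ^ 2 ≤ A * B) :
    2 * k * (Real.sqrt P * Real.sqrt Q) ≤ A * P + B * Q := by
  have h2 : k ≤ Real.sqrt (A * B) := (Real.le_sqrt hk (mul_nonneg hA hB)).2 h
  have h3 : Real.sqrt (A * P) * Real.sqrt (B * Q)
      = Real.sqrt (A * B) * (Real.sqrt P * Real.sqrt Q) := by
    rw [Real.sqrt_mul hA, Real.sqrt_mul hB, Real.sqrt_mul hA]
    ring
  have h4 : 2 * (Real.sqrt (A * P) * Real.sqrt (B * Q)) ≤ A * P + B * Q := by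
    nlinarith [sq_nonneg (Real.sqrt (A * P) - Real.sqrt (B * Q)),
      Real.sq_sqrt (mul_nonneg hA hP), Real.sq_sqrt (mul_nonneg hB hQ)]
  have h5 : 2 * k * (Real.sqrt P * Real.sqrt Q)
      ≤ 2 * (Real.sqrt (A * B) * (Real.sqrt P * Real.sqrt Q)) := by
    have := mul_nonneg (Real.sqrt_nonneg P) (Real.sqrt_nonneg Q)
    nlinarith
  rw [← h3] at h5
  linarith

lemma sqrt_add_le_sqrt_two' {a b : ℝ} (ha : 0 ≤ a) (hb : 0 ≤ b) :
    Real.sqrt a + Real.sqrt b ≤ Real.sqrt 2 * Real.sqrt (a + b) := by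
  rw [← Real.sqrt_mul (by norm_num : (0:ℝ) ≤ 2)]
  apply (Real.le_sqrt (by positivity) (by positivity)).2
  have := Real.sq_sqrt ha
  have := Real.sq_sqrt hb
  nlinarith [sq_nonneg (Real.sqrt a - Real.sqrt b)]

lemma sqrt_add_le'' {a b : ℝ} (ha : 0 ≤ a) (hb : 0 ≤ b) :
    Real.sqrt (a + b) ≤ Real.sqrt a + Real.sqrt b := by
  rw [Real.sqrt_le_iff]
  constructor
  · positivity
  · nlinarith [Real.sq_sqrt ha, Real.sq_sqrt hb, Real.sqrt_nonneg a, Real.sqrt_nonneg b]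







set_option maxHeartbeats 1000000 in
lemma Eprime_nonpos {N : ℕ} (hN0 : (0:ℝ) < N) (m γ κ Γ : ℝ) (hm : 0 < m) (hγ : 0 < γ) (hκ : 0 < κ) (hΓ : 0 < Γ)
    (hint : κ * m ≤ γ ^ 2 * Γ)
    (xx vv : Fin N → ℝ) (G : Fin N → Fin N → ℝ)
    (hganti : ∀ i j, G j i = - G i j)
    (hglow : ∀ i j, Γ * (xx j - xx i) ^ 2 ≤ G i j * (xx j - xx i))
    (hgabs : ∀ i j, |G i j| ≤ |xx j - xx i|)
    (hxs : ∑ i, xx i = 0) (hvs : ∑ i, vv i = 0) :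
    γ ^ 2 / (2 * m) * ∑ i, 2 * xx i * vv i
      + γ * ∑ i, (vv i * vv i
          + xx i * ((-γ * vv i + (κ / N) * ∑ j, G i j) / m))
      + m * ∑ i, 2 * vv i * ((-γ * vv i + (κ / N) * ∑ j, G i j) / m) ≤ 0 := by
  set P := ∑ i, xx i ^ 2 with hP
  set Q := ∑ i, vv i ^ 2 with hQ
  set R := ∑ i, ∑ j, xx i * G i j with hR
  set W := ∑ i, ∑ j, vv i * G i j with hW
  have hPpos : 0 ≤ P := Finset.sum_nonneg fun i _ => sq_nonneg _
  have hQpos : 0 ≤ Q := Finset.sum_nonneg fun i _ => sq_nonneg _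
  have expand : ∀ y : Fin N → ℝ,
      ∑ i, y i * ((-γ * vv i + (κ / N) * ∑ j, G i j) / m)
        = (-γ / m) * (∑ i, y i * vv i) + κ / (N * m) * ∑ i, ∑ j, y i * G i j := by
    intro y
    rw [Finset.mul_sum, Finset.mul_sum, ← Finset.sum_add_distrib]
    apply Finset.sum_congr rfl
    intro i _
    rw [show (∑ j, y i * G i j) = y i * ∑ j, G i j from (Finset.mul_sum _ _ _).symm]
    field_simp
  -- rewrite E' into canonical form
  have e1 : ∑ i, 2 * xx i * vv i = 2 * ∑ i, xx i * vv i := by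
    rw [Finset.mul_sum]
    exact Finset.sum_congr rfl fun i _ => by ring
  have hvv : ∑ i, vv i * vv i = Q := by
    rw [hQ]
    exact Finset.sum_congr rfl fun i _ => by ring
  have e2 : ∑ i, (vv i * vv i
      + xx i * ((-γ * vv i + (κ / N) * ∑ j, G i j) / m))
      = Q + ((-γ / m) * (∑ i, xx i * vv i) + κ / (N * m) * R) := by
    rw [Finset.sum_add_distrib, expand xx, hvv]
  have e3 : ∑ i, 2 * vv i * ((-γ * vv i + (κ / N) * ∑ j, G i j) / m)
      = 2 * ((-γ / m) * Q + κ / (N * m) * W) := by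
    have : ∑ i, 2 * vv i * ((-γ * vv i + (κ / N) * ∑ j, G i j) / m)
        = 2 * ∑ i, vv i * ((-γ * vv i + (κ / N) * ∑ j, G i j) / m) := by
      rw [Finset.mul_sum]
      exact Finset.sum_congr rfl fun i _ => by ring
    rw [this, expand vv, hvv, hW]
  rw [e1, e2, e3]
  have hEeq : γ ^ 2 / (2 * m) * (2 * ∑ i, xx i * vv i)
      + γ * (Q + ((-γ / m) * (∑ i, xx i * vv i) + κ / (N * m) * R))
      + m * (2 * ((-γ / m) * Q + κ / (N * m) * W))
      = -γ * Q + γ * κ / (N * m) * R + 2 * κ / N * W := by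
    field_simp
    ring
  rw [hEeq]
  -- bound R
  have hRle : R ≤ -(Γ * N * P) := by
    have h2R := antisym_double_sum' G hganti xx
    have hterm : ∀ i j : Fin N, (xx i - xx j) * G i j ≤ -(Γ * (xx i - xx j) ^ 2) := by
      intro i j
      have h := hglow i j
      have e : (xx i - xx j) * G i j = -(G i j * (xx j - xx i)) := by ring
      have e2 : (xx i - xx j) ^ 2 = (xx j - xx i) ^ 2 := by ring
      rw [e, e2]
      linarith
    have hsum : ∑ i, ∑ j, (xx i - xx j) * G i j
        ≤ ∑ i, ∑ j, -(Γ * (xx i - xx j) ^ 2) :=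
      Finset.sum_le_sum fun i _ => Finset.sum_le_sum fun j _ => hterm i j
    have hcollect : ∑ i, ∑ j, -(Γ * (xx i - xx j) ^ 2)
        = -(Γ * (2 * N * P - 2 * (∑ i, xx i) ^ 2)) := by
      rw [← double_sum_sq' xx]
      simp [Finset.mul_sum, Finset.sum_neg_distrib]
    rw [hcollect, hxs] at hsum
    rw [← h2R] at hsum
    nlinarith [hsum]
  -- bound W
  have hWle : W ≤ N * (Real.sqrt P * Real.sqrt Q) := by
    have h2W := antisym_double_sum' G hganti vv
    have hterm : ∀ i j : Fin N, (vv i - vv j) * G i j ≤ |vv i - vv j| * |xx i - xx j| := by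
      intro i j
      calc (vv i - vv j) * G i j ≤ |(vv i - vv j) * G i j| := le_abs_self _
        _ = |vv i - vv j| * |G i j| := abs_mul _ _
        _ ≤ |vv i - vv j| * |xx i - xx j| := by
            apply mul_le_mul_of_nonneg_left _ (abs_nonneg _)
            rw [abs_sub_comm (xx i)]
            exact hgabs i j
    have hsum : ∑ i, ∑ j, (vv i - vv j) * G i j
        ≤ ∑ i, ∑ j, |vv i - vv j| * |xx i - xx j| :=
      Finset.sum_le_sum fun i _ => Finset.sum_le_sum fun j _ => hterm i j
    have hcs := cs_double' (fun i j => |vv i - vv j|) (fun i j => |xx i - xx j|)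
    simp only [sq_abs] at hcs
    rw [double_sum_sq' vv, double_sum_sq' xx, hxs, hvs] at hcs
    have hsqQ : Real.sqrt (2 * N * Q - 2 * 0 ^ 2) = Real.sqrt (2 * N) * Real.sqrt Q := by
      rw [show (2 * (N:ℝ) * Q - 2 * 0 ^ 2) = 2 * N * Q by ring,
        Real.sqrt_mul (by positivity)]
    have hsqP : Real.sqrt (2 * N * P - 2 * 0 ^ 2) = Real.sqrt (2 * N) * Real.sqrt P := by
      rw [show (2 * (N:ℝ) * P - 2 * 0 ^ 2) = 2 * N * P by ring,
        Real.sqrt_mul (by positivity)]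
    rw [hsqQ, hsqP] at hcs
    have hss : Real.sqrt (2 * N) * Real.sqrt (2 * N) = 2 * N :=
      Real.mul_self_sqrt (by positivity)
    have : 2 * W ≤ 2 * N * (Real.sqrt P * Real.sqrt Q) := by
      rw [h2W]
      calc ∑ i, ∑ j, (vv i - vv j) * G i j
          ≤ Real.sqrt (2 * N) * Real.sqrt Q * (Real.sqrt (2 * N) * Real.sqrt P) :=
            le_trans hsum hcs
        _ = 2 * N * (Real.sqrt P * Real.sqrt Q) := by
            rw [show Real.sqrt (2*N) * Real.sqrt Q * (Real.sqrt (2*N) * Real.sqrt P)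
              = Real.sqrt (2*N) * Real.sqrt (2*N) * (Real.sqrt P * Real.sqrt Q) by ring, hss]
    linarith
  -- final quadratic estimate
  have hA : (0:ℝ) ≤ γ * κ * Γ / m := by positivity
  have hkey : 2 * κ * (Real.sqrt P * Real.sqrt Q) ≤ (γ * κ * Γ / m) * P + γ * Q := by
    apply two_mul_sqrt_le' hA hγ.le hPpos hQpos hκ.le
    rw [div_mul_eq_mul_div, le_div_iff₀ hm]
    have h1 : κ * (κ * m) ≤ κ * (γ ^ 2 * Γ) := mul_le_mul_of_nonneg_left hint hκ.le
    nlinarith [h1]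
  have hc1 : γ * κ / (N * m) * R ≤ γ * κ / (N * m) * (-(Γ * N * P)) :=
    mul_le_mul_of_nonneg_left hRle (by positivity)
  have hc2 : 2 * κ / N * W ≤ 2 * κ / N * (N * (Real.sqrt P * Real.sqrt Q)) :=
    mul_le_mul_of_nonneg_left hWle (by positivity)
  have hc1' : γ * κ / (N * m) * (-(Γ * N * P)) = -(γ * κ * Γ / m * P) := by
    field_simp
  have hc2' : 2 * κ / N * (N * (Real.sqrt P * Real.sqrt Q))
      = 2 * κ * (Real.sqrt P * Real.sqrt Q) := by
    field_simp
  rw [hc1'] at hc1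
  rw [hc2'] at hc2
  linarith



set_option maxHeartbeats 1000000 in
lemma abstract_stability (N : ℕ) (hN : 1 ≤ N) (m γ κ Γ : ℝ)
    (hm : 0 < m) (hγ : 0 < γ) (hκ : 0 < κ) (hΓ : 0 < Γ)
    (hint : κ * m ≤ γ ^ 2 * Γ)
    (x v : ℝ → Fin N → ℝ) (g : ℝ → Fin N → Fin N → ℝ)
    (hx' : ∀ t : ℝ, ∀ i, HasDerivAt (fun s => x s i) (v t i) t)
    (hvd : ∀ i, Differentiable ℝ (fun t => v t i))
    (hv' : ∀ t ≥ (0:ℝ), ∀ i, HasDerivAt (fun s => v s i)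
        ((-γ * v t i + (κ / N) * ∑ j, g t i j) / m) t)
    (hganti : ∀ t ≥ (0:ℝ), ∀ i j, g t j i = - g t i j)
    (hglow : ∀ t ≥ (0:ℝ), ∀ i j, Γ * (x t j - x t i) ^ 2 ≤ g t i j * (x t j - x t i))
    (hgabs : ∀ t ≥ (0:ℝ), ∀ i j, |g t i j| ≤ |x t j - x t i|)
    (hxsum : ∀ t ≥ (0:ℝ), ∑ i, x t i = 0)
    (hvsum : ∀ t ≥ (0:ℝ), ∑ i, v t i = 0) :
    ∃ C > (0:ℝ), ∀ t ≥ (0:ℝ),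
      Real.sqrt (∑ i, x t i ^ 2) + Real.sqrt (∑ i, v t i ^ 2)
        ≤ C * (Real.sqrt (∑ i, x 0 i ^ 2) + Real.sqrt (∑ i, v 0 i ^ 2)) := by
  have hN0 : (0:ℝ) < N := by exact_mod_cast Nat.lt_of_lt_of_le Nat.zero_lt_one hN
  set E : ℝ → ℝ := fun t =>
    γ ^ 2 / (2 * m) * ∑ i, x t i ^ 2 + γ * ∑ i, x t i * v t i + m * ∑ i, v t i ^ 2
    with hE
  set E' : ℝ → ℝ := fun t =>
    γ ^ 2 / (2 * m) * ∑ i, 2 * x t i * v t i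
      + γ * ∑ i, (v t i * v t i
          + x t i * ((-γ * v t i + (κ / N) * ∑ j, g t i j) / m))
      + m * ∑ i, 2 * v t i * ((-γ * v t i + (κ / N) * ∑ j, g t i j) / m)
    with hE'
  have hxdiff : ∀ i, Differentiable ℝ (fun t => x t i) := fun i t => (hx' t i).differentiableAt
  have hEdiff : Differentiable ℝ E := by
    apply Differentiable.add
    apply Differentiable.add
    · exact (Differentiable.fun_sum (fun i _ => ((hxdiff i).pow 2))).const_mul _
    · exact (Differentiable.fun_sum (fun i _ => (hxdiff i).mul (hvd i))).const_mul _
    · exact (Differentiable.fun_sum (fun i _ => ((hvd i).pow 2))).const_mul _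
  have hEderiv : ∀ t ≥ (0:ℝ), HasDerivAt E (E' t) t := by
    intro t ht
    have h1 : HasDerivAt (fun s => ∑ i, x s i ^ 2) (∑ i, 2 * x t i * v t i) t := by
      apply HasDerivAt.fun_sum
      intro i _
      have := (hx' t i).fun_pow 2
      simpa using this
    have h2 : HasDerivAt (fun s => ∑ i, x s i * v s i)
        (∑ i, (v t i * v t i
          + x t i * ((-γ * v t i + (κ / N) * ∑ j, g t i j) / m))) t := by
      apply HasDerivAt.fun_sum
      intro i _
      exact (hx' t i).mul (hv' t ht i)
    have h3 : HasDerivAt (fun s => ∑ i, v s i ^ 2)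
        (∑ i, 2 * v t i * ((-γ * v t i + (κ / N) * ∑ j, g t i j) / m)) t := by
      apply HasDerivAt.fun_sum
      intro i _
      have := (hv' t ht i).fun_pow 2
      simpa using this
    exact ((h1.const_mul _).add (h2.const_mul _)).add (h3.const_mul _)
  have hE'le : ∀ t ≥ (0:ℝ), E' t ≤ 0 := by
    intro t ht
    exact Eprime_nonpos hN0 m γ κ Γ hm hγ hκ hΓ hint (x t) (v t) (g t)
      (hganti t ht) (hglow t ht) (hgabs t ht) (hxsum t ht) (hvsum t ht)
  have hanti : AntitoneOn E (Set.Ici 0) := by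
    apply antitoneOn_of_deriv_nonpos (convex_Ici 0) hEdiff.continuous.continuousOn
      hEdiff.differentiableOn
    intro t ht
    rw [interior_Ici] at ht
    rw [(hEderiv t (le_of_lt ht)).deriv]
    exact hE'le t (le_of_lt ht)
  -- comparison constants
  set c₀ : ℝ := min (γ ^ 2 / (2 * m) / 4) (m / 3) with hc₀
  set c₁ : ℝ := γ ^ 2 / (2 * m) + γ / 2 + m with hc₁
  have hc₀pos : 0 < c₀ := lt_min (by positivity) (by positivity)
  have hc₁pos : 0 < c₁ := by positivity
  -- Cauchy–Schwarz for single sums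
  have habs : ∀ t : ℝ, |∑ i, x t i * v t i|
      ≤ Real.sqrt (∑ i, x t i ^ 2) * Real.sqrt (∑ i, v t i ^ 2) := by
    intro t
    have hcs := Finset.sum_mul_sq_le_sq_mul_sq Finset.univ (fun i => x t i) (fun i => v t i)
    have h2 : |∑ i, x t i * v t i| = Real.sqrt ((∑ i, x t i * v t i) ^ 2) :=
      (Real.sqrt_sq_eq_abs _).symm
    rw [h2, ← Real.sqrt_mul (by positivity)]
    exact Real.sqrt_le_sqrt hcs
  have hlow : ∀ t : ℝ, c₀ * ((∑ i, x t i ^ 2) + ∑ i, v t i ^ 2) ≤ E t := by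
    intro t
    set P := ∑ i, x t i ^ 2
    set Q := ∑ i, v t i ^ 2
    have hPpos : 0 ≤ P := Finset.sum_nonneg fun i _ => sq_nonneg _
    have hQpos : 0 ≤ Q := Finset.sum_nonneg fun i _ => sq_nonneg _
    have h1 : 2 * (γ / 2) * (Real.sqrt P * Real.sqrt Q)
        ≤ (3 / 4 * (γ ^ 2 / (2 * m))) * P + (2 * m / 3) * Q := by
      apply two_mul_sqrt_le' (by positivity) (by positivity) hPpos hQpos (by positivity)
      have : (γ / 2) ^ 2 = (3 / 4 * (γ ^ 2 / (2 * m))) * (2 * m / 3) := by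
        field_simp
        ring
      exact this.le
    have h2 := habs t
    have h3 : -(Real.sqrt P * Real.sqrt Q) ≤ ∑ i, x t i * v t i := by
      have := neg_abs_le (∑ i, x t i * v t i)
      linarith
    have h4 : c₀ ≤ γ ^ 2 / (2 * m) / 4 := min_le_left _ _
    have h5 : c₀ ≤ m / 3 := min_le_right _ _
    have hEt : E t = γ ^ 2 / (2 * m) * P + γ * ∑ i, x t i * v t i + m * Q := rfl
    rw [hEt]
    have h3' : γ * -(Real.sqrt P * Real.sqrt Q) ≤ γ * ∑ i, x t i * v t i :=
      mul_le_mul_of_nonneg_left h3 hγ.le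
    have h6 : c₀ * P ≤ γ ^ 2 / (2 * m) / 4 * P := mul_le_mul_of_nonneg_right h4 hPpos
    have h7 : c₀ * Q ≤ m / 3 * Q := mul_le_mul_of_nonneg_right h5 hQpos
    linarith [h1, h3', h6, h7]
  have hup : E 0 ≤ c₁ * ((∑ i, x 0 i ^ 2) + ∑ i, v 0 i ^ 2) := by
    set P := ∑ i, x 0 i ^ 2
    set Q := ∑ i, v 0 i ^ 2
    have hPpos : 0 ≤ P := Finset.sum_nonneg fun i _ => sq_nonneg _
    have hQpos : 0 ≤ Q := Finset.sum_nonneg fun i _ => sq_nonneg _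
    have h2 := habs 0
    have h3 : ∑ i, x 0 i * v 0 i ≤ Real.sqrt P * Real.sqrt Q :=
      le_trans (le_abs_self _) h2
    have h4 : 2 * (Real.sqrt P * Real.sqrt Q) ≤ P + Q := by
      nlinarith [sq_nonneg (Real.sqrt P - Real.sqrt Q), Real.sq_sqrt hPpos, Real.sq_sqrt hQpos]
    have hE0 : E 0 = γ ^ 2 / (2 * m) * P + γ * ∑ i, x 0 i * v 0 i + m * Q := rfl
    rw [hE0, hc₁]
    have h3' : γ * ∑ i, x 0 i * v 0 i ≤ γ * (Real.sqrt P * Real.sqrt Q) :=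
      mul_le_mul_of_nonneg_left h3 hγ.le
    have h4' : γ * (2 * (Real.sqrt P * Real.sqrt Q)) ≤ γ * (P + Q) :=
      mul_le_mul_of_nonneg_left h4 hγ.le
    have h5 : 0 ≤ m * P := mul_nonneg hm.le hPpos
    have h6 : 0 ≤ γ ^ 2 / (2 * m) * Q := by positivity
    linarith [h3', h4', h5, h6]
  refine ⟨Real.sqrt 2 * Real.sqrt (c₁ / c₀), by positivity, ?_⟩
  intro t ht
  set P := ∑ i, x t i ^ 2
  set Q := ∑ i, v t i ^ 2
  set P0 := ∑ i, x 0 i ^ 2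
  set Q0 := ∑ i, v 0 i ^ 2
  have hPpos : 0 ≤ P := Finset.sum_nonneg fun i _ => sq_nonneg _
  have hQpos : 0 ≤ Q := Finset.sum_nonneg fun i _ => sq_nonneg _
  have hP0pos : 0 ≤ P0 := Finset.sum_nonneg fun i _ => sq_nonneg _
  have hQ0pos : 0 ≤ Q0 := Finset.sum_nonneg fun i _ => sq_nonneg _
  have hEle : E t ≤ E 0 := hanti (Set.self_mem_Ici) ht ht
  have hchain : c₀ * (P + Q) ≤ c₁ * (P0 + Q0) := le_trans (hlow t) (le_trans hEle hup)
  have hPQ : P + Q ≤ c₁ / c₀ * (P0 + Q0) := by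
    rw [div_mul_eq_mul_div, le_div_iff₀ hc₀pos]
    linarith [hchain]
  calc Real.sqrt P + Real.sqrt Q
      ≤ Real.sqrt 2 * Real.sqrt (P + Q) := sqrt_add_le_sqrt_two' hPpos hQpos
    _ ≤ Real.sqrt 2 * Real.sqrt (c₁ / c₀ * (P0 + Q0)) := by
        apply mul_le_mul_of_nonneg_left (Real.sqrt_le_sqrt hPQ) (Real.sqrt_nonneg 2)
    _ = Real.sqrt 2 * (Real.sqrt (c₁ / c₀) * Real.sqrt (P0 + Q0)) := by
        rw [Real.sqrt_mul (by positivity)]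
    _ ≤ Real.sqrt 2 * (Real.sqrt (c₁ / c₀) * (Real.sqrt P0 + Real.sqrt Q0)) := by
        apply mul_le_mul_of_nonneg_left _ (Real.sqrt_nonneg 2)
        exact mul_le_mul_of_nonneg_left (sqrt_add_le'' hP0pos hQ0pos) (Real.sqrt_nonneg _)
    _ = Real.sqrt 2 * Real.sqrt (c₁ / c₀) * (Real.sqrt P0 + Real.sqrt Q0) := by ring

lemma sin_diff_abs (a b : ℝ) : |Real.sin a - Real.sin b| ≤ |a - b| := by
  rw [Real.sin_sub_sin, abs_mul, abs_mul]
  have h1 : |Real.sin ((a - b) / 2)| ≤ |(a - b) / 2| := Real.abs_sin_le_abs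
  have h2 : |Real.cos ((a + b) / 2)| ≤ 1 := Real.abs_cos_le_one _
  have h3 : |(a - b) / 2| = |a - b| / 2 := by rw [abs_div]; norm_num
  have h4 : |(2:ℝ)| = 2 := by norm_num
  rw [h4]
  calc 2 * |Real.sin ((a - b) / 2)| * |Real.cos ((a + b) / 2)|
      ≤ 2 * |(a - b) / 2| * 1 := by
        apply mul_le_mul (mul_le_mul_of_nonneg_left h1 (by norm_num)) h2 (abs_nonneg _)
        positivity
    _ = |a - b| := by rw [h3]; ring

lemma antisym_sum_zero {N : ℕ} (f : Fin N → Fin N → ℝ)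
    (hf : ∀ i j, f j i = - f i j) : ∑ i, ∑ j, f i j = 0 := by
  have h : ∑ i, ∑ j, f i j = ∑ j, ∑ i, f i j := Finset.sum_comm
  have h2 : ∑ j, ∑ i, f i j = - ∑ i, ∑ j, f i j := by
    rw [← Finset.sum_neg_distrib]
    apply Finset.sum_congr rfl
    intro j _
    rw [← Finset.sum_neg_distrib]
    exact Finset.sum_congr rfl fun i _ => by rw [hf j i]
  linarith [h, h2]

lemma abs_le_phaseDiam {N : ℕ} (hN : 1 ≤ N) (Θ : Fin N → ℝ) (i j : Fin N) :
    |Θ j - Θ i| ≤ phaseDiam Θ := by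
  haveI : Nonempty (Fin N) := Fin.pos_iff_nonempty.mp hN
  have hbdd : BddAbove (Set.range fun p : Fin N × Fin N => Θ p.1 - Θ p.2) :=
    (Set.finite_range _).bddAbove
  have h1 : Θ j - Θ i ≤ phaseDiam Θ := le_ciSup hbdd (j, i)
  have h2 : Θ i - Θ j ≤ phaseDiam Θ := le_ciSup hbdd (i, j)
  rw [abs_le]
  constructor <;> linarith

lemma const_of_hasDerivAt_zero {f : ℝ → ℝ} (hc : Continuous f)
    (hf : ∀ t ≥ (0:ℝ), HasDerivAt f 0 t) : ∀ t ≥ (0:ℝ), f t = f 0 := by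
  intro t ht
  exact constant_of_has_deriv_right_zero (hc.continuousOn)
    (fun y hy => (hf y hy.1).hasDerivWithinAt) t ⟨ht, le_refl t⟩


end KuramotoAux

set_option maxHeartbeats 1000000 in
/-- Uniform-in-time ℓ²-stability of the inertial Kuramoto flow
for identical oscillators with all-to-all coupling: there is a constant
`C > 0`, independent of time, such that
`‖Θ(t) − Θ̃(t)‖ + ‖Ω(t) − Ω̃(t)‖ ≤ C·(‖Θ(0) − Θ̃(0)‖ + ‖Ω(0) − Ω̃(0)‖)`
for all `t ≥ 0`. -/
theorem kuramoto_inertia_uniform_stability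
    (N : ℕ) (hN : 1 ≤ N)
    (m γ κ : ℝ) (hm : 0 < m) (hγpos : 0 < γ) (hκ : 0 < κ)
    (θ θt : ℝ → Fin N → ℝ)
    (hreg : ∀ i, ContDiff ℝ 2 (fun t => θ t i))
    (hregt : ∀ i, ContDiff ℝ 2 (fun t => θt t i))
    (hode : ∀ t ≥ (0:ℝ), ∀ i,
      m * deriv (deriv (fun s => θ s i)) t
        = -γ * deriv (fun s => θ s i) t
          + (κ / N) * ∑ j, Real.sin (θ t j - θ t i))
    (hodet : ∀ t ≥ (0:ℝ), ∀ i,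
      m * deriv (deriv (fun s => θt s i)) t
        = -γ * deriv (fun s => θt s i) t
          + (κ / N) * ∑ j, Real.sin (θt t j - θt t i))
    (hθ0 : ∑ i, θ 0 i = 0) (hθt0 : ∑ i, θt 0 i = 0)
    (hω0 : ∑ i, deriv (fun s => θ s i) 0 = 0)
    (hωt0 : ∑ i, deriv (fun s => θt s i) 0 = 0)
    (hγ : 1 / 2 < γ)
    (S : ℝ) (hS0 : 0 < S) (hSπ : S < Real.pi)
    (hD : ∀ t ≥ (0:ℝ), phaseDiam (θ t) + phaseDiam (θt t) ≤ S)
    (Γt : ℝ) (hΓt : Γt = Real.sin S / S)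
    (hint : κ / (2 * Γt) ≤ (2 * γ - 1) / (2 * m))
    (X V : ℝ → Fin N → ℝ)
    (hX : X = fun t i => θ t i - θt t i)
    (hV : V = fun t i =>
      deriv (fun s => θ s i) t - deriv (fun s => θt s i) t) :
    ∃ C > (0:ℝ), ∀ t ≥ (0:ℝ),
      Real.sqrt (∑ i, (X t i) ^ 2) + Real.sqrt (∑ i, (V t i) ^ 2)
        ≤ C * (Real.sqrt (∑ i, (X 0 i) ^ 2)
          + Real.sqrt (∑ i, (V 0 i) ^ 2)) := by
  subst hX
  subst hV
  have hsinS : 0 < Real.sin S := Real.sin_pos_of_pos_of_lt_pi hS0 hSπ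
  have hΓpos : 0 < Γt := hΓt ▸ div_pos hsinS hS0
  have hN0 : (0:ℝ) < N := by exact_mod_cast Nat.lt_of_lt_of_le Nat.zero_lt_one hN
  -- the interval condition gives κ m ≤ γ² Γt
  have hint' : κ * m ≤ γ ^ 2 * Γt := by
    rw [div_le_div_iff₀ (by positivity) (by positivity)] at hint
    nlinarith [hint, sq_nonneg (γ - 1), hΓpos]
  -- differentiability
  have hdθ : ∀ i, Differentiable ℝ (fun t => θ t i) :=
    fun i => (hreg i).differentiable (by norm_num)
  have hdθt : ∀ i, Differentiable ℝ (fun t => θt t i) :=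
    fun i => (hregt i).differentiable (by norm_num)
  have hdω : ∀ i, Differentiable ℝ (deriv (fun t => θ t i)) := by
    intro i
    have h := hreg i
    rw [show (2 : WithTop ℕ∞) = 1 + 1 from by norm_num, contDiff_succ_iff_deriv] at h
    exact h.2.2.differentiable (by norm_num)
  have hdωt : ∀ i, Differentiable ℝ (deriv (fun t => θt t i)) := by
    intro i
    have h := hregt i
    rw [show (2 : WithTop ℕ∞) = 1 + 1 from by norm_num, contDiff_succ_iff_deriv] at h
    exact h.2.2.differentiable (by norm_num)
  -- the coupling differences
  set g : ℝ → Fin N → Fin N → ℝ :=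
    fun t i j => Real.sin (θ t j - θ t i) - Real.sin (θt t j - θt t i) with hg
  -- derivative of positions
  have hx' : ∀ t : ℝ, ∀ i, HasDerivAt (fun s => θ s i - θt s i)
      (deriv (fun s => θ s i) t - deriv (fun s => θt s i) t) t :=
    fun t i => ((hdθ i t).hasDerivAt).sub ((hdθt i t).hasDerivAt)
  -- velocities derivatives from the ODE
  have hω' : ∀ t ≥ (0:ℝ), ∀ i, HasDerivAt (deriv (fun s => θ s i))
      ((-γ * deriv (fun s => θ s i) t + (κ / N) * ∑ j, Real.sin (θ t j - θ t i)) / m) t := by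
    intro t ht i
    have h1 : HasDerivAt (deriv (fun s => θ s i)) (deriv (deriv (fun s => θ s i)) t) t :=
      (hdω i t).hasDerivAt
    have h2 := hode t ht i
    have h3 : deriv (deriv (fun s => θ s i)) t
        = (-γ * deriv (fun s => θ s i) t + (κ / N) * ∑ j, Real.sin (θ t j - θ t i)) / m := by
      rw [eq_div_iff (ne_of_gt hm)]
      linarith [h2]
    rwa [h3] at h1
  have hωt' : ∀ t ≥ (0:ℝ), ∀ i, HasDerivAt (deriv (fun s => θt s i))
      ((-γ * deriv (fun s => θt s i) t + (κ / N) * ∑ j, Real.sin (θt t j - θt t i)) / m) t := by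
    intro t ht i
    have h1 : HasDerivAt (deriv (fun s => θt s i)) (deriv (deriv (fun s => θt s i)) t) t :=
      (hdωt i t).hasDerivAt
    have h2 := hodet t ht i
    have h3 : deriv (deriv (fun s => θt s i)) t
        = (-γ * deriv (fun s => θt s i) t + (κ / N) * ∑ j, Real.sin (θt t j - θt t i)) / m := by
      rw [eq_div_iff (ne_of_gt hm)]
      linarith [h2]
    rwa [h3] at h1
  have hv' : ∀ t ≥ (0:ℝ), ∀ i, HasDerivAt
      (fun s => deriv (fun u => θ u i) s - deriv (fun u => θt u i) s)
      ((-γ * (deriv (fun u => θ u i) t - deriv (fun u => θt u i) t)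
        + (κ / N) * ∑ j, g t i j) / m) t := by
    intro t ht i
    have h := (hω' t ht i).sub (hωt' t ht i)
    refine h.congr_deriv (Eq.symm ?_)
    rw [hg]
    rw [Finset.sum_sub_distrib]
    field_simp
    ring
  have hvd : ∀ i, Differentiable ℝ
      (fun t => deriv (fun u => θ u i) t - deriv (fun u => θt u i) t) :=
    fun i => (hdω i).sub (hdωt i)
  -- antisymmetry of sin couplings
  have hsinanti : ∀ (Θ : ℝ → Fin N → ℝ) (t : ℝ) (i j : Fin N),
      Real.sin (Θ t i - Θ t j) = - Real.sin (Θ t j - Θ t i) := by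
    intro Θ t i j
    rw [show Θ t i - Θ t j = -(Θ t j - Θ t i) by ring, Real.sin_neg]
  -- conservation of total velocity difference
  set w : ℝ → ℝ :=
    fun t => ∑ i, (deriv (fun s => θ s i) t - deriv (fun s => θt s i) t) with hw
  have hwdiff : Differentiable ℝ w :=
    Differentiable.fun_sum fun i _ => (hdω i).sub (hdωt i)
  have hw0 : w 0 = 0 := by
    rw [hw]
    simp only [Finset.sum_sub_distrib, hω0, hωt0, sub_zero]
  have hw' : ∀ t ≥ (0:ℝ), HasDerivAt w (-(γ / m) * w t) t := by
    intro t ht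
    have h := HasDerivAt.fun_sum (fun i (_ : i ∈ Finset.univ) => (hω' t ht i).sub (hωt' t ht i))
    refine h.congr_deriv (Eq.symm ?_)
    have hz1 : ∑ i, ∑ j, Real.sin (θ t j - θ t i) = 0 :=
      antisym_sum_zero _ (fun i j => by
        rw [show θ t i - θ t j = -(θ t j - θ t i) by ring, Real.sin_neg])
    have hz2 : ∑ i, ∑ j, Real.sin (θt t j - θt t i) = 0 :=
      antisym_sum_zero _ (fun i j => by
        rw [show θt t i - θt t j = -(θt t j - θt t i) by ring, Real.sin_neg])
    have e : ∀ i : Fin N,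
        ((-γ * deriv (fun s => θ s i) t + (κ / N) * ∑ j, Real.sin (θ t j - θ t i)) / m)
          - ((-γ * deriv (fun s => θt s i) t + (κ / N) * ∑ j, Real.sin (θt t j - θt t i)) / m)
        = -(γ / m) * (deriv (fun s => θ s i) t - deriv (fun s => θt s i) t)
          + (κ / (N * m)) * (∑ j, Real.sin (θ t j - θ t i))
          - (κ / (N * m)) * (∑ j, Real.sin (θt t j - θt t i)) := by
      intro i
      field_simp
      ring
    calc -(γ / m) * w t
        = ∑ i, (-(γ / m) * (deriv (fun s => θ s i) t - deriv (fun s => θt s i) t))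
          + (κ / (N * m)) * (∑ i, ∑ j, Real.sin (θ t j - θ t i))
          - (κ / (N * m)) * (∑ i, ∑ j, Real.sin (θt t j - θt t i)) := by
          rw [hz1, hz2, hw, Finset.mul_sum]
          ring
      _ = ∑ i, (((-γ * deriv (fun s => θ s i) t
              + (κ / N) * ∑ j, Real.sin (θ t j - θ t i)) / m)
          - ((-γ * deriv (fun s => θt s i) t
              + (κ / N) * ∑ j, Real.sin (θt t j - θt t i)) / m)) := by
          rw [Finset.mul_sum, Finset.mul_sum,
            ← Finset.sum_add_distrib, ← Finset.sum_sub_distrib]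
          exact Finset.sum_congr rfl fun i _ => (e i).symm
  have hvsum : ∀ t ≥ (0:ℝ), w t = 0 := by
    have hA : ∀ t ≥ (0:ℝ), HasDerivAt (fun s => w s * Real.exp (γ / m * s)) 0 t := by
      intro t ht
      have hexp : HasDerivAt (fun s : ℝ => Real.exp (γ / m * s))
          (Real.exp (γ / m * t) * (γ / m * 1)) t :=
        (HasDerivAt.const_mul (γ / m) (hasDerivAt_id t)).exp
      have h := (hw' t ht).mul hexp
      refine h.congr_deriv (Eq.symm ?_)
      ring
    have hAc : Continuous (fun s => w s * Real.exp (γ / m * s)) :=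
      hwdiff.continuous.mul (Real.continuous_exp.comp (continuous_const.mul continuous_id))
    intro t ht
    have h := const_of_hasDerivAt_zero hAc hA t ht
    rw [hw0] at h
    simp only [zero_mul] at h
    have hexpne : Real.exp (γ / m * t) ≠ 0 := Real.exp_ne_zero _
    exact (mul_eq_zero.mp h).resolve_right hexpne
  -- conservation of total position difference
  set sx : ℝ → ℝ := fun t => ∑ i, (θ t i - θt t i) with hsx
  have hsxdiff : Differentiable ℝ sx :=
    Differentiable.fun_sum fun i _ => (hdθ i).sub (hdθt i)
  have hsx' : ∀ t ≥ (0:ℝ), HasDerivAt sx 0 t := by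
    intro t ht
    have h := HasDerivAt.fun_sum (fun i (_ : i ∈ Finset.univ) => hx' t i)
    rw [show (0:ℝ) = w t from (hvsum t ht).symm]
    exact h
  have hxsum : ∀ t ≥ (0:ℝ), sx t = 0 := by
    intro t ht
    have h := const_of_hasDerivAt_zero hsxdiff.continuous hsx' t ht
    rw [h, hsx]
    simp only [Finset.sum_sub_distrib, hθ0, hθt0, sub_zero]
  -- properties of g
  have hganti : ∀ t ≥ (0:ℝ), ∀ i j, g t j i = - g t i j := by
    intro t ht i j
    rw [hg]
    simp only
    rw [show θ t i - θ t j = -(θ t j - θ t i) by ring, Real.sin_neg,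
      show θt t i - θt t j = -(θt t j - θt t i) by ring, Real.sin_neg]
    ring
  have habs : ∀ t ≥ (0:ℝ), ∀ i j : Fin N,
      |θ t j - θ t i| + |θt t j - θt t i| ≤ S := by
    intro t ht i j
    have h1 := abs_le_phaseDiam hN (θ t) i j
    have h2 := abs_le_phaseDiam hN (θt t) i j
    linarith [hD t ht]
  have hglow : ∀ t ≥ (0:ℝ), ∀ i j, Γt * ((θ t j - θt t j) - (θ t i - θt t i)) ^ 2
      ≤ g t i j * ((θ t j - θt t j) - (θ t i - θt t i)) := by
    intro t ht i j
    have hab := habs t ht i j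
    have h := key_sin_ineq hS0 hSπ hab
    have e : (θ t j - θt t j) - (θ t i - θt t i)
        = (θ t j - θ t i) - (θt t j - θt t i) := by ring
    rw [e, hΓt]
    exact h
  have hgabs : ∀ t ≥ (0:ℝ), ∀ i j, |g t i j|
      ≤ |(θ t j - θt t j) - (θ t i - θt t i)| := by
    intro t ht i j
    have e : (θ t j - θt t j) - (θ t i - θt t i)
        = (θ t j - θ t i) - (θt t j - θt t i) := by ring
    rw [e]
    exact sin_diff_abs _ _
  -- apply the abstract stability result
  exact abstract_stability N hN m γ κ Γt hm hγpos hκ hΓpos hint'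
    (fun t i => θ t i - θt t i)
    (fun t i => deriv (fun s => θ s i) t - deriv (fun s => θt s i) t) g
    (fun t i => hx' t i) hvd hv' hganti hglow hgabs hxsum hvsum
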